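/- Let M be an n×n matrix over L of Iwahori form. Fix 1 ≤ m ≤ n, and order the strictly increasing m-tuples of indices from {1, …, n} lexicographically. For strictly increasing m-tuples s and t, let M_{s,t} denote the m×m minor of M with rows indexed by s and columns indexed by t. Then det(M_{s,t}) ∈ o_L for all s and t; det(M_{s,s}) ∈ o_L^× for every s; and det(M_{s,t}) ∈ ε·o_L whenever s is lexicographically greater than t. (Equivalently, the m-th exterior power matrix ⋀^m M, written in the lexicographically ordered basis of increasing m-tuples, is again of Iwahori form.) -/

import Mathlib

noncomputable section

open Matrix

/-- The ε-adic valuation on `L = k̄((ε))`, with `val 0 = ∞`. -/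
def val {K : Type*} [Field K] (x : LaurentSeries K) : WithTop ℤ := x.orderTop

/-- A square matrix over `L = k̄((ε))` is of Iwahori form: diagonal entries are units of
`o_L` (valuation `0`), entries above the diagonal lie in `o_L` (valuation `≥ 0`), and
entries below the diagonal lie in `ε·o_L` (valuation `≥ 1`). -/
def IwahoriForm {K : Type*} [Field K] {n : ℕ}
    (M : Matrix (Fin n) (Fin n) (LaurentSeries K)) : Prop :=
  (∀ i, val (M i i) = 0) ∧
  (∀ i j : Fin n, i < j → 0 ≤ val (M i j)) ∧
  (∀ i j : Fin n, j < i → 1 ≤ val (M i j))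

/-- `s` is lexicographically greater than `t` (for strictly increasing `m`-tuples of
indices, viewed as functions `Fin m → Fin n`). -/
def LexGT {n m : ℕ} (s t : Fin m → Fin n) : Prop :=
  ∃ p : Fin m, (∀ q : Fin m, q < p → s q = t q) ∧ t p < s p

section helpers

variable {K : Type*} [Field K]

lemma val_mul (x y : LaurentSeries K) : val (x * y) = val x + val y := by
  have h := (HahnSeries.addVal ℤ K).map_mul x y
  rwa [HahnSeries.addVal_apply, HahnSeries.addVal_apply, HahnSeries.addVal_apply] at h

lemma val_prod {ι : Type*} (s : Finset ι) (f : ι → LaurentSeries K) :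
    val (∏ i ∈ s, f i) = ∑ i ∈ s, val (f i) := by
  classical
  induction s using Finset.induction with
  | empty => simpa [val] using HahnSeries.orderTop_one
  | insert _ _ h ih => rw [Finset.prod_insert h, Finset.sum_insert h, val_mul, ih]

lemma val_sum_le {ι : Type*} (s : Finset ι) (f : ι → LaurentSeries K) (c : WithTop ℤ)
    (h : ∀ i ∈ s, c ≤ val (f i)) : c ≤ val (∑ i ∈ s, f i) := by
  classical
  induction s using Finset.induction with
  | empty => simp [val, le_top]
  | @insert a s' hi ih =>
    rw [Finset.sum_insert hi]
    refine le_trans (le_min (h a (Finset.mem_insert_self _ _))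
      (ih fun i hi' => h i (Finset.mem_insert_of_mem hi'))) ?_
    exact HahnSeries.min_orderTop_le_orderTop_add

lemma val_sign_smul {m : ℕ} (σ : Equiv.Perm (Fin m)) (x : LaurentSeries K) :
    val (Equiv.Perm.sign σ • x) = val x := by
  rcases Int.units_eq_one_or (Equiv.Perm.sign σ) with h | h <;>
    simp [h, val, Units.smul_def, HahnSeries.orderTop_neg]

lemma perm_le {m n : ℕ} {s t : Fin m → Fin n} (hs : StrictMono s) (ht : StrictMono t)
    (σ : Equiv.Perm (Fin m)) (h : ∀ i, s i ≤ t (σ i)) : ∀ i, s i ≤ t i := by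
  intro i
  have hq : ∃ q : Fin m, i ≤ q ∧ σ q ≤ i := by
    by_contra hc
    push_neg at hc
    have hmaps : ∀ q ∈ Finset.Ici i, σ q ∈ Finset.Ioi i := by
      intro q hqq
      simp only [Finset.mem_Ici] at hqq
      simp only [Finset.mem_Ioi]
      exact hc q hqq
    have hcard := Finset.card_le_card_of_injOn σ hmaps (σ.injective.injOn)
    have hss : Finset.Ioi i ⊂ Finset.Ici i := by
      constructor
      · intro x hx; simp only [Finset.mem_Ioi] at hx; simp [le_of_lt hx]
      · intro hsub
        have : i ∈ Finset.Ioi i := hsub (by simp)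
        simp at this
    exact absurd (Finset.card_lt_card hss) (not_lt.mpr hcard)
  obtain ⟨q, hiq, hqi⟩ := hq
  calc s i ≤ s q := hs.monotone hiq
    _ ≤ t (σ q) := h q
    _ ≤ t i := ht.monotone hqi

lemma perm_eq_one {m : ℕ} (σ : Equiv.Perm (Fin m)) (h : ∀ i, σ i ≤ i) : σ = 1 := by
  have key : ∀ k : ℕ, ∀ i : Fin m, (i : ℕ) < k → σ i = i := by
    intro k
    induction k with
    | zero => intro i hi; omega
    | succ k ih =>
      intro i hi
      by_contra hne
      have h1 : σ i < i := lt_of_le_of_ne (h i) hne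
      have h2 : σ (σ i) = σ i := ih (σ i) (by omega)
      exact hne (σ.injective h2)
  ext i
  exact congrArg Fin.val (key (i + 1) i (Nat.lt_succ_self _))

end helpers

/-- If `M` is an `n×n` matrix over `L` of Iwahori form and `1 ≤ m ≤ n`, then
for all strictly increasing `m`-tuples `s`, `t` of indices, the determinant of the minor
`M_{s,t}` lies in `o_L`; the diagonal minors `M_{s,s}` have determinant in `o_L^×`; and if
`s` is lexicographically greater than `t` then `det M_{s,t} ∈ ε·o_L`.  (Equivalently,
`⋀^m M`, written in the lexicographically ordered basis of increasing `m`-tuples, is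
again of Iwahori form.) -/
theorem minors_of_iwahori_form (F : Type*) [Field F] [Fintype F]
    (n m : ℕ) (hm : 1 ≤ m) (hmn : m ≤ n)
    (M : Matrix (Fin n) (Fin n) (LaurentSeries (AlgebraicClosure F)))
    (hM : IwahoriForm M) :
    ∀ s t : Fin m → Fin n, StrictMono s → StrictMono t →
      (0 ≤ val (M.submatrix s t).det) ∧
      (s = t → val (M.submatrix s t).det = 0) ∧
      (LexGT s t → 1 ≤ val (M.submatrix s t).det) := by

  classical
  obtain ⟨hdiag, hupper, hlower⟩ := hM
  have hentry : ∀ i j : Fin n, 0 ≤ val (M i j) := by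
    intro i j
    rcases lt_trichotomy i j with h | h | h
    · exact hupper i j h
    · subst h; exact le_of_eq (hdiag i).symm
    · exact le_trans (by norm_num) (hlower i j h)
  intro s t hs ht
  -- each permutation term has val ≥ 0
  have term0 : ∀ σ : Equiv.Perm (Fin m),
      0 ≤ val (∏ i, (M.submatrix s t) (σ i) i) := by
    intro σ
    rw [val_prod]
    exact Finset.sum_nonneg fun i _ => hentry _ _
  -- if some index has t i < s (σ i) then the term has val ≥ 1
  have term1 : ∀ σ : Equiv.Perm (Fin m), (∃ i, t i < s (σ i)) →
      1 ≤ val (∏ i, (M.submatrix s t) (σ i) i) := by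
    intro σ ⟨i₀, hi₀⟩
    rw [val_prod]
    calc (1 : WithTop ℤ) ≤ val ((M.submatrix s t) (σ i₀) i₀) := hlower _ _ hi₀
      _ ≤ ∑ i, val ((M.submatrix s t) (σ i) i) :=
        Finset.single_le_sum (fun i _ => hentry _ _) (Finset.mem_univ i₀)
  refine ⟨?_, ?_, ?_⟩
  · rw [det_apply]
    exact val_sum_le _ _ _ fun σ _ => by rw [val_sign_smul]; exact term0 σ
  · rintro rfl
    rw [det_apply]
    rw [← Finset.add_sum_erase _ _ (Finset.mem_univ (1 : Equiv.Perm (Fin m)))]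
    have hid : val (Equiv.Perm.sign (1 : Equiv.Perm (Fin m)) •
        ∏ i, (M.submatrix s s) ((1 : Equiv.Perm (Fin m)) i) i) = 0 := by
      rw [val_sign_smul, val_prod]
      exact Finset.sum_eq_zero fun i _ => hdiag (s i)
    have hrest : (1 : WithTop ℤ) ≤ val (∑ σ ∈ Finset.univ.erase (1 : Equiv.Perm (Fin m)),
        Equiv.Perm.sign σ • ∏ i, (M.submatrix s s) (σ i) i) := by
      apply val_sum_le
      intro σ hσ
      rw [val_sign_smul]
      apply term1
      by_contra hc
      push_neg at hc
      have hle : ∀ i, σ i ≤ i := fun i => (hs.le_iff_le).mp (hc i)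
      exact (Finset.mem_erase.mp hσ).1 (perm_eq_one σ hle)
    have hlt : val (Equiv.Perm.sign (1 : Equiv.Perm (Fin m)) •
        ∏ i, (M.submatrix s s) ((1 : Equiv.Perm (Fin m)) i) i) <
        val (∑ σ ∈ Finset.univ.erase (1 : Equiv.Perm (Fin m)),
        Equiv.Perm.sign σ • ∏ i, (M.submatrix s s) (σ i) i) := by
      rw [hid]; exact lt_of_lt_of_le (by norm_num) hrest
    exact (HahnSeries.orderTop_add_eq_left hlt).trans hid
  · rintro ⟨p, hpq, hp⟩
    rw [det_apply]
    apply val_sum_le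
    intro σ _
    rw [val_sign_smul]
    apply term1
    by_contra hc
    push_neg at hc
    have h' : ∀ j, s j ≤ t (σ⁻¹ j) := by
      intro j
      have := hc (σ⁻¹ j)
      simpa using this
    exact absurd (perm_le hs ht σ⁻¹ h' p) (not_le.mpr hp)
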